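/- Let σ be an element of the increasing monoid I. Then there exists a unique weakly increasing sequence of integers 1 ≤ m_1 ≤ m_2 ≤ ⋯ ≤ m_s such that σ = α_{m_1} ∘ α_{m_2} ∘ ⋯ ∘ α_{m_s}; moreover s = ℓ(σ), the length of σ. -/

import Mathlib

open scoped Classical

noncomputable section

/-- The increasing monoid `I`: the submonoid of `Function.End ℕ+` (functions under
composition) consisting of strictly increasing functions `σ : ℕ+ → ℕ+` such that
`σ n = n + ℓ` for some `ℓ` and all sufficiently large `n`. -/
def IncMonoid : Submonoid (Function.End ℕ+) where
  carrier := {f | StrictMono f ∧ ∃ (l : ℕ) (N : ℕ+), ∀ n : ℕ+, N ≤ n → ((f n : ℕ) = (n : ℕ) + l)}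
  one_mem' := ⟨fun _ _ h => h, 0, 1, fun n _ => by show ((n : ℕ+) : ℕ) = (n : ℕ) + 0; omega⟩
  mul_mem' := by
    rintro f g ⟨hf1, lf, Nf, hf2⟩ ⟨hg1, lg, Ng, hg2⟩
    refine ⟨hf1.comp hg1, lg + lf, max Nf Ng, fun n hn => ?_⟩
    have h1 : (g n : ℕ) = (n : ℕ) + lg := hg2 n (le_trans (le_max_right _ _) hn)
    have h2 : Nf ≤ g n := by
      rw [← PNat.coe_le_coe, h1]
      have : (Nf : ℕ) ≤ (n : ℕ) := (PNat.coe_le_coe _ _).2 (le_trans (le_max_left _ _) hn)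
      omega
    have h3 := hf2 (g n) h2
    show ((f (g n) : ℕ)) = (n : ℕ) + (lg + lf)
    omega

/-- The increasing monoid, as a type. -/
abbrev IncM : Type := IncMonoid

theorem IncM.strictMono (σ : IncM) : StrictMono σ.1 := σ.2.1

theorem IncM.le_apply (σ : IncM) (n : ℕ+) : n ≤ σ.1 n := by
  induction n using PNat.recOn with
  | one => exact (σ.1 1).one_le
  | succ n ih =>
      have h2 : σ.1 n < σ.1 (n + 1) := σ.strictMono (by rw [← PNat.coe_lt_coe]; push_cast; omega)
      rw [← PNat.coe_le_coe] at *
      rw [← PNat.coe_lt_coe] at h2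
      push_cast at *
      omega

/-- The underlying function of the generator `α_k`. -/
def alphaFun (k : ℕ+) : Function.End ℕ+ := fun n => if n < k then n else n + 1

theorem alphaFun_strictMono (k : ℕ+) : StrictMono (alphaFun k) := by
  intro a b hab
  unfold alphaFun
  split_ifs with h1 h2 <;>
    rw [← PNat.coe_lt_coe] at * <;> push_cast at * <;> omega

theorem alphaFun_mem (k : ℕ+) : alphaFun k ∈ IncMonoid := by
  refine ⟨alphaFun_strictMono k, 1, k, fun n hn => ?_⟩
  unfold alphaFun
  rw [if_neg (not_lt.2 hn)]
  push_cast
  ring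

/-- The generator `α_k` of the increasing monoid (`k ≥ 1`). -/
def alpha (k : ℕ+) : IncM := ⟨alphaFun k, alphaFun_mem k⟩

/-- The submonoid `I_{≥ n}` of `I` generated by the `α_i` with `i ≥ n`. -/
def Iges (n : ℕ+) : Submonoid IncM := Submonoid.closure (alpha '' Set.Ici n)

/-- The submonoid `I_{> n}` of `I` generated by the `α_i` with `i > n`. -/
def Igt (n : ℕ) : Submonoid IncM := Submonoid.closure {s | ∃ i : ℕ+, n < (i : ℕ) ∧ s = alpha i}

/-- The monoid algebra `k[I]` of the increasing monoid. -/
abbrev IncAlg (k : Type*) [Field k] : Type _ := MonoidAlgebra k IncM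

/-- The image of `σ ∈ I` in the monoid algebra `k[I]`. -/
abbrev ofInc (k : Type*) [Field k] (σ : IncM) : IncAlg k := MonoidAlgebra.of k IncM σ

/-- A `k[I]`-module is smooth if every vector is fixed by some `I_{>n}`. -/
def IsSmoothMod (k : Type*) [Field k] (M : Type*) [AddCommMonoid M]
    [Module (IncAlg k) M] : Prop :=
  ∀ x : M, ∃ n : ℕ, ∀ σ ∈ Igt n, ofInc k σ • x = x

/-! ### The principal modules `A^r` -/

/-- Index set for the basis of the principal module `A^r`:
strictly increasing `r`-tuples of positive integers. -/
def Idx (r : ℕ) : Type := {v : Fin r → ℕ+ // StrictMono v}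

/-- The action of `σ ∈ I` on the index set of `A^r`. -/
def idxAct {r : ℕ} (σ : IncM) (t : Idx r) : Idx r :=
  ⟨σ.1 ∘ t.1, (IncM.strictMono σ).comp t.2⟩

/-- The representation of the increasing monoid on the principal module `A^r`. -/
def prinRep (k : Type*) [Field k] (r : ℕ) : Representation k IncM (Idx r →₀ k) where
  toFun σ := Finsupp.lmapDomain k k (idxAct σ)
  map_one' := LinearMap.ext fun v => by
    have h : (idxAct (1 : IncM) : Idx r → Idx r) = id := funext fun t => rfl
    simp [Finsupp.lmapDomain_apply, h, Finsupp.mapDomain_id]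
  map_mul' := fun σ τ => LinearMap.ext fun v => by
    have h : (idxAct (σ * τ) : Idx r → Idx r) = (idxAct σ) ∘ (idxAct τ) :=
      funext fun t => rfl
    show Finsupp.lmapDomain k k (idxAct (σ * τ)) v =
      Finsupp.lmapDomain k k (idxAct σ) (Finsupp.lmapDomain k k (idxAct τ) v)
    simp [Finsupp.lmapDomain_apply, h, Finsupp.mapDomain_comp]

/-- The principal module `A^r`, as a module over the monoid algebra `k[I]`. -/
abbrev PrinMod (k : Type*) [Field k] (r : ℕ) : Type _ := (prinRep k r).asModule

/-- The basis vector `e_t` of the principal module `A^r`. -/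
def ePrin (k : Type*) [Field k] {r : ℕ} (t : Idx r) : PrinMod k r :=
  (prinRep k r).asModuleEquiv.symm (Finsupp.single t 1)

/-- The tuple `(1, 2, …, r)` indexing the canonical generator `e_{1,…,r}` of `A^r`. -/
def iotaIdx (r : ℕ) : Idx r :=
  ⟨fun i => ⟨(i : ℕ) + 1, Nat.succ_pos _⟩, fun a b h => by
    exact Nat.succ_lt_succ h⟩

/-! ### The simple modules `B^n` -/

/-- `σ ∈ I` fixes the natural number `n`, with the convention `σ 0 = 0`. -/
def fixesNat (σ : IncM) (n : ℕ) : Prop := ∀ h : 0 < n, σ.1 ⟨n, h⟩ = ⟨n, h⟩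

theorem fixesNat_mul (σ τ : IncM) (n : ℕ) :
    fixesNat (σ * τ) n ↔ fixesNat σ n ∧ fixesNat τ n := by
  rcases Nat.eq_zero_or_pos n with h0 | h0
  · subst h0
    constructor
    · exact fun _ => ⟨fun h => absurd h (lt_irrefl 0), fun h => absurd h (lt_irrefl 0)⟩
    · exact fun _ h => absurd h (lt_irrefl 0)
  · set p : ℕ+ := ⟨n, h0⟩
    have happ : ∀ h : 0 < n, (σ * τ).1 ⟨n, h⟩ = σ.1 (τ.1 ⟨n, h⟩) := fun _ => rfl
    constructor
    · intro h
      have hfix : σ.1 (τ.1 p) = p := h h0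
      have h1 : p ≤ τ.1 p := τ.le_apply p
      have h2 : τ.1 p ≤ σ.1 (τ.1 p) := σ.le_apply _
      have hτp : τ.1 p = p := le_antisymm (h2.trans_eq hfix) h1
      have hσp : σ.1 p = p := by rw [hτp] at hfix; exact hfix
      exact ⟨fun _ => hσp, fun _ => hτp⟩
    · rintro ⟨hσ, hτ⟩ h
      rw [happ h]
      have := hτ h0
      rw [this, hσ h0]

/-- The representation of the increasing monoid on the simple module `B^n`:
`σ` acts by the identity if `σ(n) = n` (with `σ(0) = 0`) and by `0` otherwise. -/
def bRep (k : Type*) [Field k] (n : ℕ) : Representation k IncM k where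
  toFun σ := if fixesNat σ n then 1 else 0
  map_one' := by
    rw [if_pos]
    intro h
    rfl
  map_mul' := fun σ τ => by
    by_cases hσ : fixesNat σ n
    · by_cases hτ : fixesNat τ n
      · rw [if_pos ((fixesNat_mul σ τ n).2 ⟨hσ, hτ⟩), if_pos hσ, if_pos hτ, one_mul]
      · rw [if_neg (fun h => hτ ((fixesNat_mul σ τ n).1 h).2), if_pos hσ, if_neg hτ, one_mul]
    · by_cases hτ : fixesNat τ n
      · rw [if_neg (fun h => hσ ((fixesNat_mul σ τ n).1 h).1), if_neg hσ, if_pos hτ, mul_one]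
      · rw [if_neg (fun h => hσ ((fixesNat_mul σ τ n).1 h).1), if_neg hσ, if_neg hτ, mul_zero]

/-- The simple module `B^n`, as a module over the monoid algebra `k[I]`. -/
abbrev BMod (k : Type*) [Field k] (n : ℕ) : Type _ := (bRep k n).asModule

section IncFactAux

lemma IncM.mul_def (σ τ : IncM) (n : ℕ+) : (σ * τ).1 n = σ.1 (τ.1 n) := rfl

lemma IncM.one_def (n : ℕ+) : (1 : IncM).1 n = n := rfl

lemma alpha_def (k n : ℕ+) : (alpha k).1 n = if n < k then n else n + 1 := rfl

lemma IncM.ext' {σ τ : IncM} (h : ∀ n, σ.1 n = τ.1 n) : σ = τ :=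
  Subtype.ext (funext h)

lemma IncM.shift_le (σ : IncM) : ∀ n m : ℕ+, m ≤ n →
    (σ.1 m : ℕ) + ((n : ℕ) - (m : ℕ)) ≤ (σ.1 n : ℕ) := by
  intro n
  induction n using PNat.recOn with
  | one =>
      intro m hm
      have : m = 1 := le_antisymm hm m.one_le
      subst this; simp
  | succ n ih =>
      intro m hm
      rcases le_or_gt m n with h | h
      · have h1 := ih m h
        have h2 : σ.1 n < σ.1 (n + 1) := σ.strictMono (by
          rw [← PNat.coe_lt_coe]; push_cast; omega)
        rw [← PNat.coe_lt_coe] at h2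
        rw [← PNat.coe_le_coe] at h hm
        push_cast at *
        omega
      · have : m = n + 1 := by
          rw [← PNat.coe_le_coe] at hm
          rw [← PNat.coe_lt_coe] at h
          rw [← PNat.coe_inj]
          push_cast at *
          omega
        subst this
        simp

/-- the product of `alpha`s with indices `≥ c` fixes everything `< c`. -/
lemma prod_alpha_fix : ∀ (L : List ℕ+), ∀ c : ℕ+, (∀ m ∈ L, c ≤ m) →
    ∀ n : ℕ+, n < c → ((L.map alpha).prod).1 n = n := by
  intro L
  induction L with
  | nil => intro c _ n _; rfl
  | cons a L ih =>
      intro c hc n hn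
      have h1 : ((((a :: L).map alpha).prod) : IncM).1 n
          = (alpha a).1 (((L.map alpha).prod).1 n) := by
        rw [List.map_cons, List.prod_cons]; rfl
      rw [h1, ih c (fun m hm => hc m (List.mem_cons_of_mem _ hm)) n hn]
      have hna : n < a := lt_of_lt_of_le hn (hc a (List.mem_cons_self))
      rw [alpha_def, if_pos hna]

/-- the product of `alpha`s shifts by the list length at large arguments. -/
lemma prod_alpha_shift : ∀ (L : List ℕ+), ∀ n : ℕ+, (∀ m ∈ L, m ≤ n) →
    ((((L.map alpha).prod) : IncM).1 n : ℕ) = (n : ℕ) + L.length := by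
  intro L
  induction L with
  | nil => intro n _; simp [IncM.one_def]
  | cons a L ih =>
      intro n hn
      have h1 : ((((a :: L).map alpha).prod) : IncM).1 n
          = (alpha a).1 (((L.map alpha).prod).1 n) := by
        rw [List.map_cons, List.prod_cons]; rfl
      have h2 := ih n (fun m hm => hn m (List.mem_cons_of_mem _ hm))
      have ha : (a : ℕ) ≤ (n : ℕ) := (PNat.coe_le_coe _ _).2 (hn a (List.mem_cons_self))
      have h3 : ¬ ((L.map alpha).prod).1 n < a := by
        rw [← PNat.coe_lt_coe, h2]; omega
      rw [h1, alpha_def, if_neg h3, PNat.add_coe, h2, PNat.one_coe, List.length_cons]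
      omega

/-- a sorted product with head `a` does not fix `a`. -/
lemma head_not_fixed (a : ℕ+) (ρ : IncM) : (alpha a * ρ).1 a ≠ a := by
  rw [IncM.mul_def]
  have h1 : a ≤ ρ.1 a := ρ.le_apply a
  rw [alpha_def, if_neg (not_lt.2 h1)]
  intro h
  have := congrArg (fun x : ℕ+ => (x : ℕ)) h
  rw [← PNat.coe_le_coe] at h1
  push_cast at this
  omega

lemma sorted_prod_injective : ∀ L L' : List ℕ+, L.Pairwise (· ≤ ·) → L'.Pairwise (· ≤ ·) →
    ((L.map alpha).prod : IncM) = (L'.map alpha).prod → L = L' := by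
  intro L
  induction L with
  | nil =>
      intro L' _ hL' h
      cases L' with
      | nil => rfl
      | cons b L' =>
          exfalso
          have h2 : ((((b :: L').map alpha).prod) : IncM).1 b ≠ b := by
            rw [List.map_cons, List.prod_cons]
            exact head_not_fixed b _
          rw [← h] at h2
          exact h2 rfl
  | cons a L ih =>
      intro L' hL hL' h
      cases L' with
      | nil =>
          exfalso
          have h2 : ((((a :: L).map alpha).prod) : IncM).1 a ≠ a := by
            rw [List.map_cons, List.prod_cons]
            exact head_not_fixed a _
          rw [h] at h2
          exact h2 rfl
      | cons b L' =>
          rw [List.pairwise_cons] at hL hL'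
          have hab : a = b := by
            by_contra hne
            rcases lt_or_gt_of_ne hne with hlt | hgt
            · -- a < b : then the product over b::L' fixes a, but the one over a::L doesn't
              have h2 : ((((b :: L').map alpha).prod) : IncM).1 a = a :=
                prod_alpha_fix (b :: L') b
                  (fun m hm => by
                    rcases List.mem_cons.1 hm with rfl | hm
                    · exact le_refl _
                    · exact hL'.1 m hm)
                  a hlt
              have h3 : ((((a :: L).map alpha).prod) : IncM).1 a ≠ a := by
                rw [List.map_cons, List.prod_cons]; exact head_not_fixed a _
              rw [h] at h3
              exact h3 h2
            · have h2 : ((((a :: L).map alpha).prod) : IncM).1 b = b :=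
                prod_alpha_fix (a :: L) a
                  (fun m hm => by
                    rcases List.mem_cons.1 hm with rfl | hm
                    · exact le_refl _
                    · exact hL.1 m hm)
                  b hgt
              have h3 : ((((b :: L').map alpha).prod) : IncM).1 b ≠ b := by
                rw [List.map_cons, List.prod_cons]; exact head_not_fixed b _
              rw [← h] at h3
              exact h3 h2
          subst hab
          have hcancel : ((L.map alpha).prod : IncM) = (L'.map alpha).prod := by
            apply IncM.ext'
            intro n
            have h1 : (alpha a).1 (((L.map alpha).prod).1 n)
                = (alpha a).1 (((L'.map alpha).prod).1 n) := by
              have := congrFun (congrArg Subtype.val h) n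
              rw [List.map_cons, List.prod_cons, List.map_cons, List.prod_cons] at this
              exact this
            exact (alphaFun_strictMono a).injective h1
          rw [ih L' hL.2 hL'.2 hcancel]

lemma exists_min_nonfixed (σ : IncM) (h : ∃ n : ℕ+, σ.1 n ≠ n) :
    ∃ n₀ : ℕ+, σ.1 n₀ ≠ n₀ ∧ ∀ n < n₀, σ.1 n = n := by
  classical
  obtain ⟨n, hn⟩ := h
  have hP : ∃ k : ℕ, ∃ hk : 0 < k, σ.1 ⟨k, hk⟩ ≠ ⟨k, hk⟩ := ⟨n, n.2, hn⟩
  obtain ⟨hkpos, hknf⟩ := Nat.find_spec hP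
  refine ⟨⟨Nat.find hP, hkpos⟩, hknf, ?_⟩
  intro n hn2
  by_contra hne
  have hlt : (n : ℕ) < Nat.find hP := hn2
  exact Nat.find_min hP hlt ⟨n.2, hne⟩

end IncFactAux

lemma le_foldr_sup (L : List ℕ+) (N : ℕ+) : N ≤ L.foldr (· ⊔ ·) N := by
  induction L with
  | nil => exact le_refl _
  | cons a L ih => exact le_trans ih (le_sup_right)

lemma mem_le_foldr_sup (L : List ℕ+) (N : ℕ+) : ∀ m ∈ L, m ≤ L.foldr (· ⊔ ·) N := by
  induction L with
  | nil => intro m hm; exact absurd hm (List.not_mem_nil)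
  | cons a L ih =>
      intro m hm
      rcases List.mem_cons.1 hm with rfl | hm
      · exact le_sup_left
      · exact le_trans (ih m hm) le_sup_right

lemma exists_sorted_fact : ∀ (l : ℕ) (σ : IncM) (N : ℕ+),
    (∀ n : ℕ+, N ≤ n → ((σ.1 n : ℕ) = (n : ℕ) + l)) →
    ∃ L : List ℕ+, L.Pairwise (· ≤ ·) ∧ σ = (L.map alpha).prod ∧
      ∀ c : ℕ+, (∀ n < c, σ.1 n = n) → ∀ m ∈ L, c ≤ m := by
  intro l
  induction l with
  | zero =>
      intro σ N hN
      have hid : ∀ n : ℕ+, σ.1 n = n := by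
        intro n
        have h1 := σ.shift_le (N ⊔ n) n le_sup_right
        have h2 := hN (N ⊔ n) le_sup_left
        have h3 := σ.le_apply n
        rw [← PNat.coe_le_coe] at h3
        have h4 : (n : ℕ) ≤ ((N ⊔ n : ℕ+) : ℕ) := (PNat.coe_le_coe _ _).2 le_sup_right
        rw [← PNat.coe_inj]
        omega
      exact ⟨[], List.Pairwise.nil, IncM.ext' (fun n => (hid n).symm ▸ rfl),
        fun c _ m hm => absurd hm (List.not_mem_nil)⟩
  | succ l ih =>
      intro σ N hN
      -- σ is not the identity
      have hne : ∃ n : ℕ+, σ.1 n ≠ n := by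
        refine ⟨N, fun h => ?_⟩
        have := hN N (le_refl N)
        rw [h] at this
        omega
      obtain ⟨n₀, hn₀ne, hn₀min⟩ := exists_min_nonfixed σ hne
      have hn₀gt : (n₀ : ℕ) < (σ.1 n₀ : ℕ) := by
        have h1 := σ.le_apply n₀
        rw [← PNat.coe_le_coe] at h1
        rcases lt_or_eq_of_le h1 with h | h
        · exact h
        · exact absurd (PNat.coe_inj.1 h.symm) hn₀ne
      have hbig : ∀ n : ℕ+, n₀ ≤ n → (n₀ : ℕ) < (σ.1 n : ℕ) := by
        intro n hn
        rcases lt_or_eq_of_le hn with h | h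
        · exact lt_trans hn₀gt ((PNat.coe_lt_coe _ _).2 (σ.strictMono h))
        · rw [← h]; exact hn₀gt
      -- define τ with σ = alpha n₀ * τ
      set τf : ℕ+ → ℕ+ := fun n =>
        if (n : ℕ) < (n₀ : ℕ) then n
        else ⟨max 1 ((σ.1 n : ℕ) - 1), lt_of_lt_of_le one_pos (le_max_left _ _)⟩ with hτf
      have hτlt : ∀ n : ℕ+, n < n₀ → τf n = n := by
        intro n hn
        simp only [hτf]; exact if_pos ((PNat.coe_lt_coe _ _).2 hn)
      have hτge : ∀ n : ℕ+, n₀ ≤ n → (τf n : ℕ) = (σ.1 n : ℕ) - 1 := by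
        intro n hn
        have h1 : ¬ (n : ℕ) < (n₀ : ℕ) := not_lt.2 ((PNat.coe_le_coe _ _).2 hn)
        have h2 := hbig n hn
        rw [show τf n = ⟨max 1 ((σ.1 n : ℕ) - 1), lt_of_lt_of_le one_pos (le_max_left _ _)⟩ from if_neg h1]
        show max 1 ((σ.1 n : ℕ) - 1) = (σ.1 n : ℕ) - 1
        have h5 : 1 ≤ (n₀ : ℕ) := n₀.2
        have h6 : 1 ≤ (σ.1 n : ℕ) - 1 := by omega
        exact max_eq_right h6
      have hτmono : StrictMono τf := by
        intro a b hab
        rw [← PNat.coe_lt_coe]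
        have habn : (a : ℕ) < (b : ℕ) := (PNat.coe_lt_coe _ _).2 hab
        have hmono : (σ.1 a : ℕ) < (σ.1 b : ℕ) := (PNat.coe_lt_coe _ _).2 (σ.strictMono hab)
        rcases lt_or_ge a n₀ with ha | ha
        · rcases lt_or_ge b n₀ with hb | hb
          · rw [hτlt a ha, hτlt b hb]; exact habn
          · rw [hτlt a ha, hτge b hb]
            have h2 := hbig b hb
            have h3 : (a : ℕ) < (n₀ : ℕ) := (PNat.coe_lt_coe _ _).2 ha
            omega
        · have hb : n₀ ≤ b := le_trans ha (le_of_lt hab)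
          rw [hτge a ha, hτge b hb]
          have h2 := hbig a ha
          omega
      have hτshift : ∀ n : ℕ+, N ⊔ n₀ ≤ n → ((τf n : ℕ) = (n : ℕ) + l) := by
        intro n hn
        have h1 := hτge n (le_trans le_sup_right hn)
        have h2 := hN n (le_trans le_sup_left hn)
        have h3 := hbig n (le_trans le_sup_right hn)
        omega
      set τ : IncM := ⟨τf, hτmono, l, N ⊔ n₀, hτshift⟩ with hτ
      have hfact : σ = alpha n₀ * τ := by
        apply IncM.ext'
        intro n
        rw [IncM.mul_def]
        rcases lt_or_ge n n₀ with h | h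
        · have h1 : τ.1 n = n := hτlt n h
          rw [h1, alpha_def, if_pos h, hn₀min n h]
        · have h1 : (τ.1 n : ℕ) = (σ.1 n : ℕ) - 1 := hτge n h
          have h2 := hbig n h
          have h3 : ¬ τ.1 n < n₀ := by
            rw [← PNat.coe_lt_coe]
            omega
          rw [alpha_def, if_neg h3, ← PNat.coe_inj]
          rw [PNat.add_coe, PNat.one_coe, h1]
          omega
      obtain ⟨L', hL'sorted, hL'prod, hL'min⟩ := ih τ (N ⊔ n₀) hτshift
      have hn₀L' : ∀ m ∈ L', n₀ ≤ m := hL'min n₀ (fun n hn => hτlt n hn)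
      refine ⟨n₀ :: L', ?_, ?_, ?_⟩
      · rw [List.pairwise_cons]; exact ⟨hn₀L', hL'sorted⟩
      · rw [List.map_cons, List.prod_cons, ← hL'prod]
        exact hfact
      · intro c hc m hm
        have hcn₀ : c ≤ n₀ := by
          by_contra hcon
          exact hn₀ne (hc n₀ (not_le.1 hcon))
        rcases List.mem_cons.1 hm with rfl | hm
        · exact hcn₀
        · exact le_trans hcn₀ (hn₀L' m hm)

/-- Every `σ` in the increasing monoid is uniquely a product
`α_{m_1} ∘ α_{m_2} ∘ ⋯ ∘ α_{m_s}` with `m_1 ≤ m_2 ≤ ⋯ ≤ m_s`, and `s = ℓ(σ)`. -/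
theorem exists_unique_weak_factorization (σ : IncM) :
    (∃! L : List ℕ+, L.Pairwise (· ≤ ·) ∧ σ = (L.map alpha).prod) ∧
      ∀ L : List ℕ+, L.Pairwise (· ≤ ·) → σ = (L.map alpha).prod →
        ∀ (l : ℕ) (N : ℕ+), (∀ n : ℕ+, N ≤ n → ((σ.1 n : ℕ) = (n : ℕ) + l)) →
          L.length = l := by
  constructor
  · obtain ⟨mono, l, N, hN⟩ := σ.2
    obtain ⟨L, hs, hp, -⟩ := exists_sorted_fact l σ N hN
    refine ⟨L, ⟨hs, hp⟩, ?_⟩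
    rintro L' ⟨hs', hp'⟩
    exact sorted_prod_injective L' L hs' hs (hp'.symm.trans hp)
  · intro L hs hp l N hN
    have h1 := prod_alpha_shift L (L.foldr (· ⊔ ·) N) (mem_le_foldr_sup L N)
    have h2 := hN (L.foldr (· ⊔ ·) N) (le_foldr_sup L N)
    rw [← hp] at h1
    omega


end
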